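/- Fix natural numbers m, r₁, r₂ with r₁ ≤ m and r₂ ≤ m. Let C₁ be the subspace of functions (ZMod 2)^m × (ZMod 2)^m → ZMod 2 that are evaluations of polynomials in 2m variables whose degree in the first m variables (total degree after setting the last m variables to constants, uniformly over those constants; equivalently, every monomial has degree at most r₁ in the first m variables) is at most r₁, and let C₂ be the analogous subspace with degree at most r₂ in the last m variables. Then C₁ ∩ C₂ is exactly the set of evaluations of polynomials every monomial of which has degree at most r₁ in the first m variables and at most r₂ in the last m variables, and dim(C₁ ∩ C₂) · 2^{2m} = dim C₁ · dim C₂; explicitly dim C₁ = (∑_{i=0}^{r₁} (m choose i)) · 2^m, dim C₂ = 2^m · (∑_{i=0}^{r₂} (m choose i)), and dim(C₁ ∩ C₂) = (∑_{i=0}^{r₁} (m choose i)) · (∑_{i=0}^{r₂} (m choose i)). -/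

import Mathlib

open MvPolynomial

/-- Degree of a monomial (exponent vector) `d` in the first block of `m` variables. -/
def degFst {m : ℕ} (d : (Fin m ⊕ Fin m) →₀ ℕ) : ℕ := ∑ i : Fin m, d (Sum.inl i)

/-- Degree of a monomial (exponent vector) `d` in the last block of `m` variables. -/
def degSnd {m : ℕ} (d : (Fin m ⊕ Fin m) →₀ ℕ) : ℕ := ∑ i : Fin m, d (Sum.inr i)

/-- The code `RM(r₁, m) ⊗ RM(m, m)`: evaluations on `(ZMod 2)^m × (ZMod 2)^m` of polynomials
in `2m` variables each of whose monomials has degree at most `r₁` in the first `m`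
variables. -/
def Cfst (r₁ m : ℕ) :
    Submodule (ZMod 2) ((Fin m → ZMod 2) × (Fin m → ZMod 2) → ZMod 2) where
  carrier := {f | ∃ p : MvPolynomial (Fin m ⊕ Fin m) (ZMod 2),
    (∀ d ∈ p.support, degFst d ≤ r₁) ∧ ∀ z, f z = eval (Sum.elim z.1 z.2) p}
  zero_mem' := ⟨0, by simp, by simp⟩
  add_mem' := by
    rintro f g ⟨p, hp, hf⟩ ⟨q, hq, hg⟩
    refine ⟨p + q, fun d hd => ?_, fun z => by simp [hf z, hg z]⟩
    rcases Finset.mem_union.mp (MvPolynomial.support_add hd) with h | h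
    exacts [hp d h, hq d h]
  smul_mem' := by
    rintro c f ⟨p, hp, hf⟩
    refine ⟨c • p, fun d hd => hp d (Finsupp.support_smul hd), fun z => by simp [hf z]⟩

/-- The code `RM(m, m) ⊗ RM(r₂, m)`: evaluations on `(ZMod 2)^m × (ZMod 2)^m` of polynomials
in `2m` variables each of whose monomials has degree at most `r₂` in the last `m`
variables. -/
def Csnd (r₂ m : ℕ) :
    Submodule (ZMod 2) ((Fin m → ZMod 2) × (Fin m → ZMod 2) → ZMod 2) where
  carrier := {f | ∃ p : MvPolynomial (Fin m ⊕ Fin m) (ZMod 2),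
    (∀ d ∈ p.support, degSnd d ≤ r₂) ∧ ∀ z, f z = eval (Sum.elim z.1 z.2) p}
  zero_mem' := ⟨0, by simp, by simp⟩
  add_mem' := by
    rintro f g ⟨p, hp, hf⟩ ⟨q, hq, hg⟩
    refine ⟨p + q, fun d hd => ?_, fun z => by simp [hf z, hg z]⟩
    rcases Finset.mem_union.mp (MvPolynomial.support_add hd) with h | h
    exacts [hp d h, hq d h]
  smul_mem' := by
    rintro c f ⟨p, hp, hf⟩
    refine ⟨c • p, fun d hd => hp d (Finsupp.support_smul hd), fun z => by simp [hf z]⟩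

open Finset
namespace Stmt17Aux
variable {m : ℕ}

/-- monomial-evaluation functions indexed by pairs of subsets -/
def bvec (q : Finset (Fin m) × Finset (Fin m)) :
    (Fin m → ZMod 2) × (Fin m → ZMod 2) → ZMod 2 :=
  fun z => (∏ i ∈ q.1, z.1 i) * ∏ j ∈ q.2, z.2 j

lemma zmod2_mul_self (x : ZMod 2) : x * x = x := by revert x; decide

lemma zmod2_pow (x : ZMod 2) {k : ℕ} (hk : k ≠ 0) : x ^ k = x := by
  induction k with
  | zero => exact absurd rfl hk
  | succ n ih =>
    rcases Nat.eq_zero_or_pos n with h | h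
    · simp [h]
    · rw [pow_succ, ih h.ne', zmod2_mul_self]

def suppFst (d : (Fin m ⊕ Fin m) →₀ ℕ) : Finset (Fin m) :=
  univ.filter fun i => d (Sum.inl i) ≠ 0
def suppSnd (d : (Fin m ⊕ Fin m) →₀ ℕ) : Finset (Fin m) :=
  univ.filter fun j => d (Sum.inr j) ≠ 0

lemma card_suppFst_le (d : (Fin m ⊕ Fin m) →₀ ℕ) : (suppFst d).card ≤ degFst d := by
  rw [suppFst, degFst, card_filter]
  refine Finset.sum_le_sum fun i _ => ?_
  by_cases h : d (Sum.inl i) = 0 <;> simp [h] <;> omega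

lemma card_suppSnd_le (d : (Fin m ⊕ Fin m) →₀ ℕ) : (suppSnd d).card ≤ degSnd d := by
  rw [suppSnd, degSnd, card_filter]
  refine Finset.sum_le_sum fun i _ => ?_
  by_cases h : d (Sum.inr i) = 0 <;> simp [h] <;> omega

/-- evaluation as a linear map -/
noncomputable def evalLin : MvPolynomial (Fin m ⊕ Fin m) (ZMod 2) →ₗ[ZMod 2]
    ((Fin m → ZMod 2) × (Fin m → ZMod 2) → ZMod 2) where
  toFun p := fun z => eval (Sum.elim z.1 z.2) p
  map_add' p q := by funext z; simp
  map_smul' c p := by funext z; simp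

lemma prod_pow_eq (z : (Fin m → ZMod 2) × (Fin m → ZMod 2)) (d : (Fin m ⊕ Fin m) →₀ ℕ) :
    ∏ i : Fin m ⊕ Fin m, (Sum.elim z.1 z.2) i ^ d i = bvec (suppFst d, suppSnd d) z := by
  rw [Fintype.prod_sum_type, bvec]
  congr 1
  · rw [suppFst, Finset.prod_filter]
    refine Finset.prod_congr rfl fun i _ => ?_
    by_cases h : d (Sum.inl i) = 0 <;> simp [h, zmod2_pow]
  · rw [suppSnd, Finset.prod_filter]
    refine Finset.prod_congr rfl fun j _ => ?_
    by_cases h : d (Sum.inr j) = 0 <;> simp [h, zmod2_pow]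

lemma evalLin_eq (p : MvPolynomial (Fin m ⊕ Fin m) (ZMod 2)) :
    evalLin p = ∑ d ∈ p.support, coeff d p • bvec (suppFst d, suppSnd d) := by
  funext z
  rw [show evalLin p z = eval (Sum.elim z.1 z.2) p from rfl, eval_eq']
  rw [Finset.sum_apply]
  exact Finset.sum_congr rfl fun d _ => by
    rw [Pi.smul_apply, smul_eq_mul, prod_pow_eq]

def chi (S : Finset (Fin m)) : Fin m → ZMod 2 := fun i => if i ∈ S then 1 else 0

lemma prod_chi (S' S : Finset (Fin m)) :
    (∏ i ∈ S', chi S i) = if S' ⊆ S then 1 else 0 := by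
  by_cases h : S' ⊆ S
  · rw [if_pos h]
    exact Finset.prod_eq_one fun i hi => by simp [chi, h hi]
  · rw [if_neg h]
    obtain ⟨i, hi, hni⟩ := Finset.not_subset.mp h
    exact Finset.prod_eq_zero hi (by simp [chi, hni])

lemma bvec_chi (q : Finset (Fin m) × Finset (Fin m)) (S T : Finset (Fin m)) :
    bvec q (chi S, chi T) = if q.1 ⊆ S ∧ q.2 ⊆ T then 1 else 0 := by
  rw [bvec]
  simp only [prod_chi]
  by_cases h1 : q.1 ⊆ S <;> by_cases h2 : q.2 ⊆ T <;> simp [h1, h2]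

lemma bvec_li : LinearIndependent (ZMod 2) (bvec (m := m)) := by
  rw [Fintype.linearIndependent_iff]
  intro c hc
  have key : ∀ S T : Finset (Fin m), ∑ q ∈ S.powerset ×ˢ T.powerset, c q = 0 := by
    intro S T
    have h := congrFun hc (chi S, chi T)
    simp only [Finset.sum_apply, Pi.smul_apply, smul_eq_mul, Pi.zero_apply, bvec_chi,
      mul_ite, mul_one, mul_zero] at h
    rw [← h, ← Finset.sum_filter]
    refine Finset.sum_congr ?_ fun _ _ => rfl
    ext q
    simp [Finset.mem_product, Finset.mem_powerset]
  suffices H : ∀ n, ∀ S T : Finset (Fin m), S.card + T.card ≤ n → c (S, T) = 0 by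
    exact fun q => H (q.1.card + q.2.card) q.1 q.2 le_rfl
  intro n
  induction n using Nat.strong_induction_on with
  | _ n IH =>
    intro S T hn
    have hmem : (S, T) ∈ S.powerset ×ˢ T.powerset := by
      simp [Finset.mem_product]
    have h0 := key S T
    rw [← Finset.add_sum_erase _ _ hmem] at h0
    have hrest : ∑ q ∈ (S.powerset ×ˢ T.powerset).erase (S, T), c q = 0 := by
      refine Finset.sum_eq_zero fun q hq => ?_
      obtain ⟨hne, hq'⟩ := Finset.mem_erase.mp hq
      rw [Finset.mem_product, Finset.mem_powerset, Finset.mem_powerset] at hq'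
      have h1 : q.1.card ≤ S.card := Finset.card_le_card hq'.1
      have h2 : q.2.card ≤ T.card := Finset.card_le_card hq'.2
      have hlt : q.1.card + q.2.card < S.card + T.card := by
        rcases eq_or_ne q.1 S with h | h
        · have hne2 : q.2 ≠ T := fun hT => hne (Prod.ext h hT)
          have := Finset.card_lt_card (HasSubset.Subset.ssubset_of_ne hq'.2 hne2)
          omega
        · have := Finset.card_lt_card (HasSubset.Subset.ssubset_of_ne hq'.1 h)
          omega
      have := IH (q.1.card + q.2.card) (by omega) q.1 q.2 le_rfl
      simpa using this
    rw [hrest, add_zero] at h0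
    exact h0

/-- the squarefree exponent vector attached to a pair of subsets -/
noncomputable def dof (q : Finset (Fin m) × Finset (Fin m)) : (Fin m ⊕ Fin m) →₀ ℕ :=
  Finsupp.equivFunOnFinite.symm
    (Sum.elim (fun i => if i ∈ q.1 then 1 else 0) (fun j => if j ∈ q.2 then 1 else 0))

@[simp] lemma dof_inl (q : Finset (Fin m) × Finset (Fin m)) (i : Fin m) :
    dof q (Sum.inl i) = if i ∈ q.1 then 1 else 0 := by
  simp [dof]

@[simp] lemma dof_inr (q : Finset (Fin m) × Finset (Fin m)) (j : Fin m) :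
    dof q (Sum.inr j) = if j ∈ q.2 then 1 else 0 := by
  simp [dof]

lemma degFst_dof (q : Finset (Fin m) × Finset (Fin m)) : degFst (dof q) = q.1.card := by
  rw [degFst]
  simp only [dof_inl]
  rw [Finset.sum_ite_mem, Finset.univ_inter, Finset.sum_const, smul_eq_mul, mul_one]

lemma degSnd_dof (q : Finset (Fin m) × Finset (Fin m)) : degSnd (dof q) = q.2.card := by
  rw [degSnd]
  simp only [dof_inr]
  rw [Finset.sum_ite_mem, Finset.univ_inter, Finset.sum_const, smul_eq_mul, mul_one]

lemma suppFst_dof (q : Finset (Fin m) × Finset (Fin m)) : suppFst (dof q) = q.1 := by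
  ext i
  by_cases h : i ∈ q.1 <;> simp [suppFst, h]

lemma suppSnd_dof (q : Finset (Fin m) × Finset (Fin m)) : suppSnd (dof q) = q.2 := by
  ext j
  by_cases h : j ∈ q.2 <;> simp [suppSnd, h]

lemma evalLin_monomial (q : Finset (Fin m) × Finset (Fin m)) :
    evalLin (monomial (dof q) (1 : ZMod 2)) = bvec q := by
  rw [evalLin_eq, support_monomial, if_neg one_ne_zero, Finset.sum_singleton,
    coeff_monomial, if_pos rfl, one_smul, suppFst_dof, suppSnd_dof]

/-- counting subsets of bounded cardinality -/
lemma card_filter_card_le (r : ℕ) :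
    (Finset.univ.filter fun S : Finset (Fin m) => S.card ≤ r).card
      = ∑ i ∈ Finset.range (r + 1), m.choose i := by
  have hset : (Finset.univ.filter fun S : Finset (Fin m) => S.card ≤ r)
      = (Finset.range (r + 1)).biUnion fun i => Finset.powersetCard i Finset.univ := by
    ext S
    simp [Finset.mem_powersetCard, Nat.lt_succ_iff]
  rw [hset, Finset.card_biUnion]
  · refine Finset.sum_congr rfl fun i _ => ?_
    rw [Finset.card_powersetCard, Finset.card_univ, Fintype.card_fin]
  · intro i _ j _ hij
    simp only [Function.onFun]
    rw [Finset.disjoint_left]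
    intro S hS hS'
    rw [Finset.mem_powersetCard] at hS hS'
    exact hij (hS.2 ▸ hS'.2)

lemma Cfst_eq (r₁ : ℕ) :
    Cfst r₁ m = Submodule.span (ZMod 2)
      (bvec '' {q : Finset (Fin m) × Finset (Fin m) | q.1.card ≤ r₁}) := by
  apply le_antisymm
  · rintro f ⟨p, hp, hf⟩
    have hfe : f = evalLin p := funext fun z => hf z
    rw [hfe, evalLin_eq]
    refine Submodule.sum_mem _ fun d hd => Submodule.smul_mem _ _ (Submodule.subset_span ?_)
    exact ⟨(suppFst d, suppSnd d), le_trans (card_suppFst_le d) (hp d hd), rfl⟩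
  · rw [Submodule.span_le]
    rintro _ ⟨q, hq, rfl⟩
    refine ⟨monomial (dof q) 1, fun d hd => ?_, fun z => ?_⟩
    · rw [support_monomial, if_neg one_ne_zero, Finset.mem_singleton] at hd
      subst hd; rw [degFst_dof]; exact hq
    · rw [← evalLin_monomial]; rfl

lemma Csnd_eq (r₂ : ℕ) :
    Csnd r₂ m = Submodule.span (ZMod 2)
      (bvec '' {q : Finset (Fin m) × Finset (Fin m) | q.2.card ≤ r₂}) := by
  apply le_antisymm
  · rintro f ⟨p, hp, hf⟩
    have hfe : f = evalLin p := funext fun z => hf z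
    rw [hfe, evalLin_eq]
    refine Submodule.sum_mem _ fun d hd => Submodule.smul_mem _ _ (Submodule.subset_span ?_)
    exact ⟨(suppFst d, suppSnd d), le_trans (card_suppSnd_le d) (hp d hd), rfl⟩
  · rw [Submodule.span_le]
    rintro _ ⟨q, hq, rfl⟩
    refine ⟨monomial (dof q) 1, fun d hd => ?_, fun z => ?_⟩
    · rw [support_monomial, if_neg one_ne_zero, Finset.mem_singleton] at hd
      subst hd; rw [degSnd_dof]; exact hq
    · rw [← evalLin_monomial]; rfl

lemma hcard_eq : Fintype.card (Finset (Fin m) × Finset (Fin m))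
    = Module.finrank (ZMod 2) ((Fin m → ZMod 2) × (Fin m → ZMod 2) → ZMod 2) := by
  rw [Module.finrank_pi]
  simp [Fintype.card_prod, Fintype.card_finset, Fintype.card_fun]

set_option maxHeartbeats 1000000 in
lemma finrank_span_bvec_image (A : Finset (Finset (Fin m) × Finset (Fin m))) :
    Module.finrank (ZMod 2) ↥(Submodule.span (ZMod 2) (bvec '' (A : Set (Finset (Fin m) × Finset (Fin m))))) = A.card := by
  classical
  rw [← Finset.coe_image]
  have hli : LinearIndependent (ZMod 2)
      (bvec ∘ (Subtype.val : {x : Finset (Fin m) × Finset (Fin m) // x ∈ A} → _)) :=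
    bvec_li.comp _ Subtype.val_injective
  have h2 := hli.linearIndepOn_id
  have hr : Set.range (bvec ∘ (Subtype.val : {x : Finset (Fin m) × Finset (Fin m) // x ∈ A} → _))
      = ((A.image bvec : Finset _) : Set ((Fin m → ZMod 2) × (Fin m → ZMod 2) → ZMod 2)) := by
    rw [Set.range_comp, Subtype.range_coe, Finset.coe_image]
  rw [hr] at h2
  rw [finrank_span_finset_eq_card h2]
  exact Finset.card_image_of_injective _ bvec_li.injective

end Stmt17Aux

open Stmt17Aux Finset


/-- For `r₁ ≤ m` and `r₂ ≤ m`, the intersection `C₁ ∩ C₂` of the two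
tensor codes consists exactly of evaluations of polynomials all of whose monomials have
degree at most `r₁` in the first `m` variables and at most `r₂` in the last `m` variables;
moreover `dim(C₁ ∩ C₂) · 2^{2m} = dim C₁ · dim C₂`, with
`dim C₁ = (∑_{i≤r₁} C(m,i)) · 2^m`, `dim C₂ = 2^m · (∑_{i≤r₂} C(m,i))`, and
`dim(C₁ ∩ C₂) = (∑_{i≤r₁} C(m,i)) · (∑_{i≤r₂} C(m,i))`. -/
theorem stmt_17 (m r₁ r₂ : ℕ) (h₁ : r₁ ≤ m) (h₂ : r₂ ≤ m) :
    (∀ f, f ∈ Cfst r₁ m ⊓ Csnd r₂ m ↔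
      ∃ p : MvPolynomial (Fin m ⊕ Fin m) (ZMod 2),
        (∀ d ∈ p.support, degFst d ≤ r₁ ∧ degSnd d ≤ r₂) ∧
        ∀ z, f z = eval (Sum.elim z.1 z.2) p) ∧
    Module.finrank (ZMod 2) ↥(Cfst r₁ m ⊓ Csnd r₂ m) * 2 ^ (2 * m)
      = Module.finrank (ZMod 2) ↥(Cfst r₁ m) * Module.finrank (ZMod 2) ↥(Csnd r₂ m) ∧
    Module.finrank (ZMod 2) ↥(Cfst r₁ m)
      = (∑ i ∈ Finset.range (r₁ + 1), Nat.choose m i) * 2 ^ m ∧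
    Module.finrank (ZMod 2) ↥(Csnd r₂ m)
      = 2 ^ m * ∑ i ∈ Finset.range (r₂ + 1), Nat.choose m i ∧
    Module.finrank (ZMod 2) ↥(Cfst r₁ m ⊓ Csnd r₂ m)
      = (∑ i ∈ Finset.range (r₁ + 1), Nat.choose m i)
        * ∑ i ∈ Finset.range (r₂ + 1), Nat.choose m i := by
  classical
  set B : Module.Basis (Finset (Fin m) × Finset (Fin m)) (ZMod 2)
      ((Fin m → ZMod 2) × (Fin m → ZMod 2) → ZMod 2) :=
    basisOfLinearIndependentOfCardEqFinrank (bvec_li (m := m)) hcard_eq with hBdef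
  have hB' : ⇑B = bvec := coe_basisOfLinearIndependentOfCardEqFinrank _ _
  -- the intersection as a span
  have hinf : Cfst r₁ m ⊓ Csnd r₂ m = Submodule.span (ZMod 2) (bvec '' ({q : Finset (Fin m) × Finset (Fin m) | q.1.card ≤ r₁} ∩ {q | q.2.card ≤ r₂})) := by
    rw [Cfst_eq, Csnd_eq]
    apply le_antisymm
    · intro f hf
      rw [Submodule.mem_inf] at hf
      obtain ⟨hf1, hf2⟩ := hf
      rw [← hB', Module.Basis.mem_span_image] at hf1 hf2 ⊢
      exact Set.subset_inter hf1 hf2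
    · exact le_inf (Submodule.span_mono (Set.image_mono Set.inter_subset_left))
        (Submodule.span_mono (Set.image_mono Set.inter_subset_right))
  -- finsets of indices
  set F₁ : Finset (Finset (Fin m)) := univ.filter (fun S => S.card ≤ r₁) with hF₁
  set F₂ : Finset (Finset (Fin m)) := univ.filter (fun S => S.card ≤ r₂) with hF₂
  have hA₁ : ((F₁ ×ˢ (univ : Finset (Finset (Fin m)))
      : Finset (Finset (Fin m) × Finset (Fin m))) : Set _)
      = {q : Finset (Fin m) × Finset (Fin m) | q.1.card ≤ r₁} := by
    ext q; simp [hF₁, Finset.mem_product]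
  have hA₂ : (((univ : Finset (Finset (Fin m))) ×ˢ F₂
      : Finset (Finset (Fin m) × Finset (Fin m))) : Set _)
      = {q : Finset (Fin m) × Finset (Fin m) | q.2.card ≤ r₂} := by
    ext q; simp [hF₂, Finset.mem_product]
  have hA₁₂ : ((F₁ ×ˢ F₂ : Finset (Finset (Fin m) × Finset (Fin m))) : Set _)
      = {q : Finset (Fin m) × Finset (Fin m) | q.1.card ≤ r₁} ∩ {q | q.2.card ≤ r₂} := by
    ext q; simp [hF₁, hF₂, Finset.mem_product]
  -- dimensions
  have hcF₁ : F₁.card = ∑ i ∈ Finset.range (r₁ + 1), Nat.choose m i := card_filter_card_le r₁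
  have hcF₂ : F₂.card = ∑ i ∈ Finset.range (r₂ + 1), Nat.choose m i := card_filter_card_le r₂
  have hd1 : Module.finrank (ZMod 2) ↥(Cfst r₁ m)
      = (∑ i ∈ Finset.range (r₁ + 1), Nat.choose m i) * 2 ^ m := by
    rw [Cfst_eq, ← hA₁, finrank_span_bvec_image, Finset.card_product, hcF₁,
      Finset.card_univ, Fintype.card_finset, Fintype.card_fin]
  have hd2 : Module.finrank (ZMod 2) ↥(Csnd r₂ m)
      = 2 ^ m * ∑ i ∈ Finset.range (r₂ + 1), Nat.choose m i := by
    rw [Csnd_eq, ← hA₂, finrank_span_bvec_image, Finset.card_product, hcF₂,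
      Finset.card_univ, Fintype.card_finset, Fintype.card_fin]
  have hd3 : Module.finrank (ZMod 2) ↥(Cfst r₁ m ⊓ Csnd r₂ m)
      = (∑ i ∈ Finset.range (r₁ + 1), Nat.choose m i)
        * ∑ i ∈ Finset.range (r₂ + 1), Nat.choose m i := by
    rw [hinf, ← hA₁₂, finrank_span_bvec_image, Finset.card_product, hcF₁, hcF₂]
  refine ⟨?_, ?_, hd1, hd2, hd3⟩
  · -- membership characterization
    intro f
    constructor
    · intro hf
      rw [hinf, ← hB', Module.Basis.mem_span_image] at hf
      refine ⟨∑ q ∈ (B.repr f).support, (B.repr f) q • monomial (dof q) (1 : ZMod 2), ?_, ?_⟩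
      · intro d hd
        obtain ⟨q, hq, hdq⟩ := Finset.mem_biUnion.mp (MvPolynomial.support_sum hd)
        have hdq' : d ∈ (monomial (dof q) (1 : ZMod 2)).support := MvPolynomial.support_smul hdq
        rw [support_monomial, if_neg one_ne_zero, Finset.mem_singleton] at hdq'
        subst hdq'
        have hqmem : q ∈ ({q : Finset (Fin m) × Finset (Fin m) | q.1.card ≤ r₁} ∩ {q | q.2.card ≤ r₂}) := hf hq
        exact ⟨by rw [degFst_dof]; exact hqmem.1, by rw [degSnd_dof]; exact hqmem.2⟩
      · intro z
        have hev : evalLin (∑ q ∈ (B.repr f).support,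
            (B.repr f) q • monomial (dof q) (1 : ZMod 2)) = f := by
          rw [map_sum]
          simp only [map_smul, evalLin_monomial]
          rw [← hB', Finset.sum_subset (Finset.subset_univ _)
            (fun q _ hq => by rw [Finsupp.notMem_support_iff.mp hq, zero_smul])]
          exact B.sum_repr f
        exact (congrFun hev z).symm
    · rintro ⟨p, hp, hf⟩
      rw [Submodule.mem_inf]
      exact ⟨⟨p, fun d hd => (hp d hd).1, hf⟩, ⟨p, fun d hd => (hp d hd).2, hf⟩⟩
  · rw [hd1, hd2, hd3, two_mul, pow_add]
    ring
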